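/- Let q be a prime power and s ≥ 1, d integers with d < s·q. If F, G are polynomials in F_q[X_1,...,X_m] of total degree at most d such that H_i(F)(P) = H_i(G)(P) for all points P ∈ F_q^m and all multi-indices i with |i| < s, then F = G. That is, the order-s evaluation map ev^s on F_q[X]_d is injective. -/

import Mathlib

/-- The `i`-th Hasse derivative of a multivariate polynomial `F`: the coefficient of `Z^i`
in `F(X + Z)`. -/
noncomputable def mvHasseDeriv {K : Type*} [CommRing K] {m : ℕ} (i : Fin m →₀ ℕ)
    (F : MvPolynomial (Fin m) K) : MvPolynomial (Fin m) K :=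
  MvPolynomial.coeff i
    (MvPolynomial.eval₂ (MvPolynomial.C.comp MvPolynomial.C)
      (fun j => MvPolynomial.C (MvPolynomial.X j) + MvPolynomial.X j) F)

namespace EvS

open MvPolynomial Finset

open scoped Classical

variable {K : Type*} [CommRing K] {m : ℕ}

lemma mvHasseDeriv_add (i : Fin m →₀ ℕ) (P Q : MvPolynomial (Fin m) K) :
    mvHasseDeriv i (P + Q) = mvHasseDeriv i P + mvHasseDeriv i Q := by
  unfold mvHasseDeriv
  rw [eval₂_add, coeff_add]

lemma mvHasseDeriv_zero (i : Fin m →₀ ℕ) :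
    mvHasseDeriv i (0 : MvPolynomial (Fin m) K) = 0 := by
  unfold mvHasseDeriv
  rw [eval₂_zero, coeff_zero]

lemma prod_monomial {τ : Type*} (s : Finset τ) (d : τ → (Fin m →₀ ℕ)) (c : τ → K) :
    (∏ t ∈ s, MvPolynomial.monomial (d t) (c t)) =
      MvPolynomial.monomial (∑ t ∈ s, d t) (∏ t ∈ s, c t) := by
  induction s using Finset.cons_induction with
  | empty => simp
  | cons a s ha ih => simp only [Finset.prod_cons, Finset.sum_cons, ih, monomial_mul]

lemma factor_expand (t : Fin m) (n : ℕ) :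
    (MvPolynomial.C (MvPolynomial.X t : MvPolynomial (Fin m) K) + MvPolynomial.X t) ^ n =
      ∑ k ∈ Finset.range (n + 1),
        MvPolynomial.monomial (R := MvPolynomial (Fin m) K) (Finsupp.single t k)
          ((n.choose k : MvPolynomial (Fin m) K) * MvPolynomial.X t ^ (n - k)) := by
  rw [add_comm, add_pow]
  refine Finset.sum_congr rfl fun k hk => ?_
  rw [monomial_eq, Finsupp.prod_single_index (by simp)]
  rw [map_mul, map_natCast, map_pow]
  ring

lemma sum_single_apply (g : Fin m → ℕ) (t' : Fin m) :
    (∑ t : Fin m, Finsupp.single t (g t)) t' = g t' := by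
  rw [Finset.sum_apply']
  rw [Finset.sum_eq_single t' (fun b _ hb => Finsupp.single_eq_of_ne' hb) (by simp)]
  simp

lemma mvHasseDeriv_monomial (i u : Fin m →₀ ℕ) (c : K) :
    mvHasseDeriv i (MvPolynomial.monomial u c) =
      if i ≤ u then
        MvPolynomial.monomial (u - i) (((∏ t, (u t).choose (i t) : ℕ) : K) * c)
      else 0 := by
  unfold mvHasseDeriv
  rw [eval₂_monomial]
  rw [Finsupp.prod_fintype _ _ (fun t => pow_zero _)]
  simp_rw [factor_expand]
  rw [Finset.prod_univ_sum]
  simp_rw [prod_monomial]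
  simp only [RingHom.coe_comp, Function.comp_apply]
  rw [MvPolynomial.coeff_C_mul]
  rw [MvPolynomial.coeff_sum]
  by_cases hle : i ≤ u
  · rw [Finset.sum_eq_single (fun t => i t)]
    · rw [coeff_monomial, if_pos]
      · rw [if_pos hle, monomial_eq]
        rw [Finsupp.prod_fintype _ _ (fun t => pow_zero _)]
        rw [Finset.prod_mul_distrib]
        have h1 : ∀ t : Fin m, (u - i) t = u t - i t := fun t => Finsupp.tsub_apply u i t
        simp_rw [h1]
        rw [map_mul, map_natCast, Nat.cast_prod]
        ring
      · ext t'
        rw [sum_single_apply]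
    · intro g hg hne
      rw [coeff_monomial, if_neg]
      intro hEq
      apply hne
      funext t
      have := congrArg (fun f => f t) hEq
      simpa [sum_single_apply] using this
    · intro hmem
      exfalso
      apply hmem
      rw [Fintype.mem_piFinset]
      intro t
      rw [Finset.mem_range]
      exact Nat.lt_succ_of_le (hle t)
  · rw [if_neg hle]
    rw [Finset.sum_eq_zero, mul_zero]
    intro g hg
    rw [coeff_monomial, if_neg]
    intro hEq
    apply hle
    intro t
    have := congrArg (fun f => f t) hEq
    simp only [sum_single_apply] at this
    rw [← this]
    rw [Fintype.mem_piFinset] at hg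
    exact Nat.lt_succ_iff.mp (Finset.mem_range.mp (hg t))

lemma mvHasseDeriv_coeff (i v : Fin m →₀ ℕ) (P : MvPolynomial (Fin m) K) :
    MvPolynomial.coeff v (mvHasseDeriv i P) =
      ((∏ t, ((v + i) t).choose (i t) : ℕ) : K) * MvPolynomial.coeff (v + i) P := by
  induction P using MvPolynomial.induction_on' with
  | add p q hp hq => rw [mvHasseDeriv_add, coeff_add, hp, hq, coeff_add, mul_add]
  | monomial u c =>
    rw [mvHasseDeriv_monomial]
    by_cases huvi : u = v + i
    · subst huvi
      have hle : i ≤ v + i := fun t => by simp [Finsupp.add_apply]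
      rw [if_pos hle]
      have hsub : v + i - i = v := by
        ext t; simp [Finsupp.tsub_apply, Finsupp.add_apply]
      rw [hsub, coeff_monomial, coeff_monomial, if_pos rfl, if_pos rfl]
    · rw [coeff_monomial, if_neg huvi, mul_zero]
      by_cases hle : i ≤ u
      · rw [if_pos hle, coeff_monomial, if_neg]
        intro hEq
        apply huvi
        subst hEq
        ext t
        simp [Finsupp.add_apply, Finsupp.tsub_apply, Nat.sub_add_cancel (hle t)]
      · rw [if_neg hle, coeff_zero]

lemma mvHasseDeriv_zero_index (P : MvPolynomial (Fin m) K) :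
    mvHasseDeriv 0 P = P := by
  ext v
  simp [mvHasseDeriv_coeff]

lemma mvHasseDeriv_natCast_mul (i : Fin m →₀ ℕ) (k : ℕ) (P : MvPolynomial (Fin m) K) :
    mvHasseDeriv i ((k : MvPolynomial (Fin m) K) * P) = k * mvHasseDeriv i P := by
  ext v
  rw [mvHasseDeriv_coeff]
  have hc : ((k : MvPolynomial (Fin m) K)) = MvPolynomial.C (k : K) := by
    simp
  rw [hc, coeff_C_mul, coeff_C_mul, mvHasseDeriv_coeff]
  ring

lemma mvHasseDeriv_sub (i : Fin m →₀ ℕ) (P Q : MvPolynomial (Fin m) K) :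
    mvHasseDeriv i (P - Q) = mvHasseDeriv i P - mvHasseDeriv i Q := by
  ext v
  simp [mvHasseDeriv_coeff, coeff_sub, mul_sub]

/-- Compatibility of `mvHasseDeriv` with `finSuccEquiv`. -/
lemma finSuccEquiv_mvHasseDeriv_coeff {n : ℕ} (i : Fin (n + 1) →₀ ℕ)
    (P : MvPolynomial (Fin (n + 1)) K) (k : ℕ) :
    (MvPolynomial.finSuccEquiv K n (mvHasseDeriv i P)).coeff k =
      mvHasseDeriv i.tail
        ((Polynomial.hasseDeriv (i 0) (MvPolynomial.finSuccEquiv K n P)).coeff k) := by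
  ext l
  rw [finSuccEquiv_coeff_coeff, mvHasseDeriv_coeff, mvHasseDeriv_coeff,
    Polynomial.hasseDeriv_coeff]
  have hcast : ((((k + i 0).choose (i 0) : ℕ)) : MvPolynomial (Fin n) K) =
      MvPolynomial.C (((k + i 0).choose (i 0) : ℕ) : K) := by simp
  rw [hcast, coeff_C_mul, finSuccEquiv_coeff_coeff]
  have hcons : l.cons k + i = (l + i.tail).cons (k + i 0) := by
    ext t
    refine Fin.cases ?_ (fun t' => ?_) t
    · simp [Finsupp.add_apply, Finsupp.cons_zero]
    · simp [Finsupp.add_apply, Finsupp.cons_succ, Finsupp.tail_apply]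
  rw [hcons]
  rw [Fin.prod_univ_succ]
  simp only [Finsupp.cons_zero, Finsupp.cons_succ]
  push_cast
  have : ∀ t' : Fin n, i (Fin.succ t') = i.tail t' := fun t' => rfl
  simp_rw [this]
  ring

/-- Hasse derivative commutes with `Polynomial.map`. -/
lemma hasseDeriv_map {R S : Type*} [CommRing R] [CommRing S] (φ : R →+* S) (j : ℕ)
    (p : Polynomial R) :
    Polynomial.hasseDeriv j (p.map φ) = (Polynomial.hasseDeriv j p).map φ := by
  ext k
  rw [Polynomial.hasseDeriv_coeff, Polynomial.coeff_map, Polynomial.coeff_map,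
    Polynomial.hasseDeriv_coeff, map_mul, map_natCast]

lemma hasseDeriv_finSuccEquiv {n : ℕ} (K : Type*) [CommRing K] (i' : Fin n →₀ ℕ) (j : ℕ)
    (P : MvPolynomial (Fin (n + 1)) K) :
    Polynomial.hasseDeriv j
        (MvPolynomial.finSuccEquiv K n (mvHasseDeriv (Finsupp.cons 0 i') P)) =
      MvPolynomial.finSuccEquiv K n (mvHasseDeriv (Finsupp.cons j i') P) := by
  ext k : 1
  rw [Polynomial.hasseDeriv_coeff, finSuccEquiv_mvHasseDeriv_coeff,
    finSuccEquiv_mvHasseDeriv_coeff]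
  simp only [Finsupp.cons_zero, Finsupp.tail_cons]
  rw [Polynomial.hasseDeriv_coeff, Polynomial.hasseDeriv_coeff]
  simp only [Nat.choose_zero_right, Nat.cast_one, one_mul, zero_add, pow_zero]
  rw [mvHasseDeriv_natCast_mul]
  simp only [add_zero]

section Field

variable {Fq : Type*} [Field Fq] [Fintype Fq]

/-- `(X - b)^r` divides a polynomial whose Hasse derivatives of order `< r` vanish at `b`. -/
lemma pow_sub_dvd_of_hasseDeriv_eval_eq_zero (f : Polynomial Fq) (b : Fq) (r : ℕ)
    (h : ∀ j < r, (Polynomial.hasseDeriv j f).eval b = 0) :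
    (Polynomial.X - Polynomial.C b) ^ r ∣ f := by
  conv_rhs => rw [← Polynomial.sum_taylor_eq f b]
  rw [Polynomial.sum]
  apply Finset.dvd_sum
  intro j hj
  have hjr : r ≤ j := by
    by_contra hlt
    push_neg at hlt
    have : (Polynomial.taylor b f).coeff j = 0 := by
      rw [Polynomial.taylor_coeff]; exact h j hlt
    rw [Polynomial.mem_support_iff] at hj
    exact hj this
  exact Dvd.dvd.mul_left (pow_dvd_pow _ hjr) _

lemma sum_rootMultiplicity_le (g : Polynomial Fq) (hg : g ≠ 0) :
    ∑ b : Fq, g.rootMultiplicity b ≤ g.natDegree := by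
  have h1 : ∑ b : Fq, g.rootMultiplicity b = ∑ b : Fq, g.roots.count b := by
    refine Finset.sum_congr rfl fun b _ => ?_
    rw [Polynomial.count_roots]
  rw [h1]
  have h2 : ∑ b : Fq, g.roots.count b = ∑ b ∈ g.roots.toFinset, g.roots.count b := by
    symm
    apply Finset.sum_subset (Finset.subset_univ _)
    intro b _ hb
    rw [Multiset.count_eq_zero]
    intro hmem
    exact hb (Multiset.mem_toFinset.mpr hmem)
  rw [h2, Multiset.toFinset_sum_count_eq]
  exact (Polynomial.card_roots' g).trans le_rfl

/-- Vanishing to order `≥ r` at `a`. -/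
def vord {n : ℕ} (P : MvPolynomial (Fin n) Fq) (a : Fin n → Fq) (r : ℕ) : Prop :=
  ∀ i : Fin n →₀ ℕ, (i.sum fun _ k => k) < r → MvPolynomial.eval a (mvHasseDeriv i P) = 0

/-- Capped multiplicity: the largest `r ≤ s` such that `P` vanishes to order `≥ r` at `a`. -/
noncomputable def Mc (s : ℕ) {n : ℕ} (P : MvPolynomial (Fin n) Fq) (a : Fin n → Fq) : ℕ :=
  Nat.findGreatest (vord P a) s

lemma vord_zero {n : ℕ} (P : MvPolynomial (Fin n) Fq) (a : Fin n → Fq) : vord P a 0 :=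
  fun i hi => absurd hi (Nat.not_lt_zero _)

lemma Mc_le (s : ℕ) {n : ℕ} (P : MvPolynomial (Fin n) Fq) (a : Fin n → Fq) : Mc s P a ≤ s :=
  Nat.findGreatest_le s

lemma vord_Mc (s : ℕ) {n : ℕ} (P : MvPolynomial (Fin n) Fq) (a : Fin n → Fq) :
    vord P a (Mc s P a) :=
  Nat.findGreatest_spec (Nat.zero_le s) (vord_zero P a)

lemma Mc_eq_of_vord {n : ℕ} {s : ℕ} {P : MvPolynomial (Fin n) Fq} {a : Fin n → Fq}
    (h : vord P a s) : Mc s P a = s :=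
  le_antisymm (Mc_le s P a) (Nat.le_findGreatest le_rfl h)

lemma exists_of_Mc_lt {n : ℕ} {s : ℕ} {P : MvPolynomial (Fin n) Fq} {a : Fin n → Fq}
    (h : Mc s P a < s) :
    ∃ i : Fin n →₀ ℕ, (i.sum fun _ k => k) ≤ Mc s P a ∧
      MvPolynomial.eval a (mvHasseDeriv i P) ≠ 0 := by
  have := Nat.findGreatest_is_greatest (Nat.lt_succ_of_le le_rfl : Mc s P a < Mc s P a + 1)
    (Nat.succ_le_of_lt h)
  unfold vord at this
  push_neg at this
  obtain ⟨i, hi1, hi2⟩ := this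
  exact ⟨i, Nat.lt_succ_iff.mp hi1, hi2⟩

lemma finsupp_sum_cons {n : ℕ} (j : ℕ) (i' : Fin n →₀ ℕ) :
    ((Finsupp.cons j i').sum fun _ k => k) = j + (i'.sum fun _ k => k) := by
  rw [Finsupp.sum_fintype _ _ (fun t => rfl), Finsupp.sum_fintype _ _ (fun t => rfl)]
  rw [Fin.sum_univ_succ]
  simp [Finsupp.cons_zero, Finsupp.cons_succ]

/-- Key per-line bound in the DKSS induction. -/
lemma line_bound {n : ℕ} (s : ℕ) (P : MvPolynomial (Fin (n + 1)) Fq) (hP : P ≠ 0)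
    (a : Fin n → Fq) :
    ∑ b : Fq, Mc s P (Fin.cons b a) ≤
      Fintype.card Fq * Mc s ((MvPolynomial.finSuccEquiv Fq n P).leadingCoeff) a +
        (MvPolynomial.finSuccEquiv Fq n P).natDegree := by
  set Q := MvPolynomial.finSuccEquiv Fq n P with hQdef
  have hQ : Q ≠ 0 := by
    rw [hQdef]
    intro h0
    exact hP (by simpa using congrArg (MvPolynomial.finSuccEquiv Fq n).symm h0)
  set t := Q.natDegree with ht
  set Pt := Q.leadingCoeff with hPt
  have hPt0 : Pt ≠ 0 := Polynomial.leadingCoeff_ne_zero.mpr hQ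
  set w := Mc s Pt a with hw
  by_cases hws : s ≤ w
  · calc ∑ b : Fq, Mc s P (Fin.cons b a) ≤ ∑ _b : Fq, s := by
          exact Finset.sum_le_sum fun b _ => Mc_le s P (Fin.cons b a)
    _ = Fintype.card Fq * s := by rw [Finset.sum_const, Finset.card_univ, smul_eq_mul]
    _ ≤ Fintype.card Fq * w + t := by
          exact le_add_right (Nat.mul_le_mul_left _ hws)
  · push_neg at hws
    obtain ⟨i', hi'sum, hi'ne⟩ := exists_of_Mc_lt hws
    set g : Polynomial Fq :=
      (MvPolynomial.finSuccEquiv Fq n (mvHasseDeriv (Finsupp.cons 0 i') P)).map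
        (MvPolynomial.eval a) with hg
    have hcoeffg : ∀ k, g.coeff k = MvPolynomial.eval a (mvHasseDeriv i' (Q.coeff k)) := by
      intro k
      rw [hg, Polynomial.coeff_map, finSuccEquiv_mvHasseDeriv_coeff]
      simp [Polynomial.hasseDeriv_zero, Finsupp.cons_zero, Finsupp.tail_cons]
      rfl
    have hgt : g.coeff t ≠ 0 := by
      rw [hcoeffg]
      exact hi'ne
    have hg0 : g ≠ 0 := fun h0 => hgt (by simp [h0])
    have hgdeg : g.natDegree = t := by
      apply le_antisymm
      · rw [Polynomial.natDegree_le_iff_coeff_eq_zero]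
        intro k hk
        rw [hcoeffg, Polynomial.coeff_eq_zero_of_natDegree_lt hk, mvHasseDeriv_zero, map_zero]
      · exact Polynomial.le_natDegree_of_ne_zero hgt
    have key : ∀ b : Fq, Mc s P (Fin.cons b a) ≤ w + g.rootMultiplicity b := by
      intro b
      by_cases hM : Mc s P (Fin.cons b a) ≤ w
      · exact hM.trans (Nat.le_add_right _ _)
      · push_neg at hM
        have hdvd : (Polynomial.X - Polynomial.C b) ^ (Mc s P (Fin.cons b a) - w) ∣ g := by
          apply pow_sub_dvd_of_hasseDeriv_eval_eq_zero
          intro j hj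
          rw [hg, hasseDeriv_map, hasseDeriv_finSuccEquiv, ← MvPolynomial.eval_eq_eval_mv_eval']
          apply vord_Mc s P (Fin.cons b a)
          rw [finsupp_sum_cons]
          omega
        have := (Polynomial.le_rootMultiplicity_iff hg0).mpr hdvd
        omega
    calc ∑ b : Fq, Mc s P (Fin.cons b a) ≤ ∑ b : Fq, (w + g.rootMultiplicity b) :=
          Finset.sum_le_sum fun b _ => key b
    _ = Fintype.card Fq * w + ∑ b : Fq, g.rootMultiplicity b := by
          rw [Finset.sum_add_distrib, Finset.sum_const, Finset.card_univ, smul_eq_mul]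
    _ ≤ Fintype.card Fq * w + t := by
          have := sum_rootMultiplicity_le g hg0
          rw [hgdeg] at this
          omega

/-- The capped multiplicity Schwartz–Zippel bound. -/
lemma count_bound (s : ℕ) : ∀ (n : ℕ) (P : MvPolynomial (Fin n) Fq), P ≠ 0 →
    (∑ a : Fin n → Fq, Mc s P a) * Fintype.card Fq ≤
      P.totalDegree * (Fintype.card Fq) ^ n := by
  intro n
  induction n with
  | zero =>
    intro P hP
    have hM : ∀ a : Fin 0 → Fq, Mc s P a = 0 := by
      intro a
      by_contra hne
      have hpos : 1 ≤ Mc s P a := Nat.one_le_iff_ne_zero.mpr hne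
      have := vord_Mc s P a 0 (by simp; exact hpos)
      rw [mvHasseDeriv_zero_index] at this
      rw [MvPolynomial.eq_C_of_isEmpty P] at this hP
      simp only [MvPolynomial.eval_C] at this
      rw [this] at hP
      simp at hP
    simp [hM]
  | succ n ih =>
    intro P hP
    set Q := MvPolynomial.finSuccEquiv Fq n P with hQdef
    have hQ : Q ≠ 0 := by
      rw [hQdef]
      intro h0
      exact hP (by simpa using congrArg (MvPolynomial.finSuccEquiv Fq n).symm h0)
    set t := Q.natDegree with ht
    set Pt := Q.leadingCoeff with hPt
    have hPt0 : Pt ≠ 0 := Polynomial.leadingCoeff_ne_zero.mpr hQ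
    set d := P.totalDegree with hd
    have hdt : Pt.totalDegree + t ≤ d := by
      have := MvPolynomial.totalDegree_coeff_finSuccEquiv_add_le P t
        (by rw [← Polynomial.leadingCoeff]; exact hPt0)
      exact this
    have htd : t ≤ d := le_trans (Nat.le_add_left _ _) hdt
    set q := Fintype.card Fq with hq
    have hq1 : 1 ≤ q := Fintype.card_pos
    -- reindex the sum
    have hsum : ∑ p : Fin (n + 1) → Fq, Mc s P p =
        ∑ a : Fin n → Fq, ∑ b : Fq, Mc s P (Fin.cons b a) := by
      have h1 : ∑ x : Fq × (Fin n → Fq), Mc s P (Fin.cons x.1 x.2) =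
          ∑ p : Fin (n + 1) → Fq, Mc s P p :=
        Fintype.sum_equiv (Fin.consEquiv fun _ => Fq) _ _ (fun x => rfl)
      rw [← h1, Fintype.sum_prod_type]
      exact Finset.sum_comm
    have hline : ∀ a : Fin n → Fq, ∑ b : Fq, Mc s P (Fin.cons b a) ≤ q * Mc s Pt a + t :=
      line_bound s P hP
    have hIH : (∑ a : Fin n → Fq, Mc s Pt a) * q ≤ Pt.totalDegree * q ^ n := ih Pt hPt0
    calc (∑ p : Fin (n + 1) → Fq, Mc s P p) * q
        = (∑ a : Fin n → Fq, ∑ b : Fq, Mc s P (Fin.cons b a)) * q := by rw [hsum]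
      _ ≤ (∑ a : Fin n → Fq, (q * Mc s Pt a + t)) * q := by
          exact Nat.mul_le_mul_right q (Finset.sum_le_sum fun a _ => hline a)
      _ = (q * (∑ a : Fin n → Fq, Mc s Pt a) + q ^ n * t) * q := by
          rw [Finset.sum_add_distrib, Finset.mul_sum, Finset.sum_const, Finset.card_univ,
            smul_eq_mul]
          congr 2
          simp [Fintype.card_fun]
          exact Or.inl rfl
      _ ≤ d * q ^ (n + 1) := by
          have h1 : q * (∑ a : Fin n → Fq, Mc s Pt a) * q ≤ q * (Pt.totalDegree * q ^ n) := by
            calc q * (∑ a : Fin n → Fq, Mc s Pt a) * q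
                = q * ((∑ a : Fin n → Fq, Mc s Pt a) * q) := by ring
              _ ≤ q * (Pt.totalDegree * q ^ n) := Nat.mul_le_mul_left q hIH
          have h2 : Pt.totalDegree ≤ d - t := by omega
          calc (q * (∑ a : Fin n → Fq, Mc s Pt a) + q ^ n * t) * q
              = q * (∑ a : Fin n → Fq, Mc s Pt a) * q + q ^ n * t * q := by ring
            _ ≤ q * (Pt.totalDegree * q ^ n) + q ^ n * t * q := by omega
            _ ≤ q * ((d - t) * q ^ n) + q ^ n * t * q := by
                have := Nat.mul_le_mul_right (q ^ n) h2
                exact Nat.add_le_add_right (Nat.mul_le_mul_left q this) _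
            _ = ((d - t) + t) * q ^ (n + 1) := by ring
            _ = d * q ^ (n + 1) := by rw [Nat.sub_add_cancel htd]

end Field

end EvS

/-- for `d < s·q`, the order-`s` evaluation map `ev^s` is injective on
polynomials of total degree at most `d`. -/
theorem evs_injective {Fq : Type*} [Field Fq] [Fintype Fq] {m s d : ℕ}
    (hm : 1 ≤ m) (hs : 1 ≤ s) (hd : d < s * Fintype.card Fq)
    (F G : MvPolynomial (Fin m) Fq) (hF : F.totalDegree ≤ d) (hG : G.totalDegree ≤ d)
    (h : ∀ (P : Fin m → Fq) (i : Fin m →₀ ℕ), (i.sum fun _ n => n) < s →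
      MvPolynomial.eval P (mvHasseDeriv i F) = MvPolynomial.eval P (mvHasseDeriv i G)) :
    F = G := by
  set D := F - G with hD
  by_contra hne
  have hD0 : D ≠ 0 := sub_ne_zero_of_ne hne
  have hvord : ∀ a : Fin m → Fq, EvS.vord D a s := by
    intro a i hi
    rw [EvS.mvHasseDeriv_sub, map_sub, h a i hi, sub_self]
  have hMc : ∀ a : Fin m → Fq, EvS.Mc s D a = s := fun a => EvS.Mc_eq_of_vord (hvord a)
  have hcount := EvS.count_bound s m D hD0
  rw [Finset.sum_congr rfl (fun a _ => hMc a)] at hcount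
  rw [Finset.sum_const, Finset.card_univ, smul_eq_mul] at hcount
  have hcard : Fintype.card (Fin m → Fq) = Fintype.card Fq ^ m := by
    simp [Fintype.card_fun]
  rw [hcard] at hcount
  have hdD : D.totalDegree ≤ d := by
    calc D.totalDegree ≤ max F.totalDegree G.totalDegree := by
          rw [hD, sub_eq_add_neg]
          exact (MvPolynomial.totalDegree_add F (-G)).trans
            (by rw [MvPolynomial.totalDegree_neg])
      _ ≤ d := max_le hF hG
  have hqpos : 0 < Fintype.card Fq := Fintype.card_pos
  have : Fintype.card Fq ^ m * s * Fintype.card Fq ≤ d * Fintype.card Fq ^ m :=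
    le_trans hcount (Nat.mul_le_mul_right _ hdD)
  have hq' : 0 < Fintype.card Fq ^ m := pow_pos hqpos m
  have h2 : (s * Fintype.card Fq) * Fintype.card Fq ^ m ≤ d * Fintype.card Fq ^ m := by
    calc (s * Fintype.card Fq) * Fintype.card Fq ^ m
        = Fintype.card Fq ^ m * s * Fintype.card Fq := by ring
      _ ≤ d * Fintype.card Fq ^ m := this
  have h3 : s * Fintype.card Fq ≤ d := Nat.le_of_mul_le_mul_right h2 hq'
  omega
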